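/- Let $N\geq3$, $q>1$, $\lambda,\theta\in\mathbb{R}$ satisfy $\ell=\Theta^2-(N-2)\Theta+\lambda>0$, where $\Theta=(\theta+2)/(q-1)$. Fix a suitable $\alpha>0$ small depending only on $N,q,\theta,\lambda$, and let $\nu>0$. For $\varepsilon\in(0,1)$ there exists $\eta_0>0$ such that for every $\eta\in(0,\eta_0)$ the function $w^-_{\varepsilon,\eta}(x)=(1-\varepsilon)\ell^{1/(q-1)}|x|^{-\Theta}|x|^{\eta}\left(1+\frac{|x|^\alpha}{\nu}\right)^{-1/\sqrt{\alpha}}$ satisfies $-\Delta w^-_{\varepsilon,\eta}-\lambda|x|^{-2}w^-_{\varepsilon,\eta}+|x|^\theta (w^-_{\varepsilon,\eta})^q\leq 0$ in $B_1(0)\setminus\{0\}$. -/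

import Mathlib

open scoped BigOperators

noncomputable def lap {N : ℕ} (u : EuclideanSpace ℝ (Fin N) → ℝ)
    (x : EuclideanSpace ℝ (Fin N)) : ℝ :=
  ∑ i : Fin N, fderiv ℝ (fun y => fderiv ℝ u y (EuclideanSpace.single i 1)) x
    (EuclideanSpace.single i 1)

lemma lap_congr {N : ℕ} {f g : EuclideanSpace ℝ (Fin N) → ℝ}
    {x : EuclideanSpace ℝ (Fin N)} (hx : 0 < ‖x‖)
    (h : ∀ y : EuclideanSpace ℝ (Fin N), 0 < ‖y‖ → f y = g y) : lap f x = lap g x := by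
  have hopen : IsOpen {y : EuclideanSpace ℝ (Fin N) | 0 < ‖y‖} :=
    isOpen_lt continuous_const continuous_norm
  have hee : ∀ y : EuclideanSpace ℝ (Fin N), 0 < ‖y‖ → f =ᶠ[nhds y] g := by
    intro y hy
    exact Filter.eventually_of_mem (hopen.mem_nhds hy) (fun z hz => h z hz)
  unfold lap
  refine Finset.sum_congr rfl fun i _ => ?_
  have h2 : (fun y => fderiv ℝ f y (EuclideanSpace.single i 1))
      =ᶠ[nhds x] (fun y => fderiv ℝ g y (EuclideanSpace.single i 1)) := by
    refine Filter.eventually_of_mem (hopen.mem_nhds hx) (fun z hz => ?_)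
    simp only []
    rw [(hee z hz).fderiv_eq]
  rw [h2.fderiv_eq]

lemma hasDerivAt_psi (a ν c p mm : ℝ) (hν : 0 < ν) (t : ℝ) (ht : 0 < t) :
    HasDerivAt (fun s : ℝ => c * s ^ p * (1 + s ^ a / ν) ^ mm)
      (c * p * t ^ (p - 1) * (1 + t ^ a / ν) ^ mm
        + c * mm * (a / ν) * t ^ (p + a - 1) * (1 + t ^ a / ν) ^ (mm - 1)) t := by
  have hG : (0:ℝ) < 1 + t ^ a / ν := by positivity
  have h1 : HasDerivAt (fun s : ℝ => s ^ p) (p * t ^ (p - 1)) t :=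
    Real.hasDerivAt_rpow_const (Or.inl ht.ne')
  have h2 : HasDerivAt (fun s : ℝ => 1 + s ^ a / ν) (a * t ^ (a - 1) / ν) t :=
    ((Real.hasDerivAt_rpow_const (Or.inl ht.ne')).div_const ν).const_add 1
  have h3 : HasDerivAt (fun s : ℝ => (1 + s ^ a / ν) ^ mm)
      (a * t ^ (a - 1) / ν * mm * (1 + t ^ a / ν) ^ (mm - 1)) t :=
    h2.rpow_const (Or.inl hG.ne')
  have h4 : HasDerivAt (fun s : ℝ => c * s ^ p * (1 + s ^ a / ν) ^ mm) _ t :=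
    (h1.const_mul c).mul h3
  refine h4.congr_deriv ?_
  have h5 : t ^ (p + a - 1) = t ^ p * t ^ (a - 1) := by
    rw [← Real.rpow_add ht]; congr 1; ring
  rw [h5]; ring

lemma lap_radial {N : ℕ} (φ φ' : ℝ → ℝ) (φ'' : ℝ)
    (x : EuclideanSpace ℝ (Fin N)) (hx : 0 < ‖x‖)
    (hd1 : ∀ t : ℝ, 0 < t → HasDerivAt φ (φ' t) t)
    (hd2 : HasDerivAt φ' φ'' (‖x‖ ^ 2)) :
    lap (fun y => φ (‖y‖ ^ 2)) x = 4 * ‖x‖ ^ 2 * φ'' + 2 * N * φ' (‖x‖ ^ 2) := by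
  have hopen : IsOpen {y : EuclideanSpace ℝ (Fin N) | 0 < ‖y‖} :=
    isOpen_lt continuous_const continuous_norm
  have hfd : ∀ y : EuclideanSpace ℝ (Fin N), 0 < ‖y‖ →
      HasFDerivAt (fun y : EuclideanSpace ℝ (Fin N) => φ (‖y‖ ^ 2))
        ((φ' (‖y‖ ^ 2)) • (2 • (innerSL ℝ y))) y := by
    intro y hy
    have hsq : HasFDerivAt (fun y : EuclideanSpace ℝ (Fin N) => ‖y‖ ^ 2)
        (2 • (innerSL ℝ y)) y := (hasStrictFDerivAt_norm_sq y).hasFDerivAt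
    exact (hd1 _ (by positivity)).comp_hasFDerivAt y hsq
  have hval : ∀ (i : Fin N) (y : EuclideanSpace ℝ (Fin N)), 0 < ‖y‖ →
      fderiv ℝ (fun y : EuclideanSpace ℝ (Fin N) => φ (‖y‖ ^ 2)) y (EuclideanSpace.single i 1)
        = φ' (‖y‖ ^ 2) * (2 * y i) := by
    intro i y hy
    rw [(hfd y hy).fderiv]
    simp [EuclideanSpace.inner_single_right]
  have key : ∀ i : Fin N,
      fderiv ℝ (fun y => fderiv ℝ (fun y : EuclideanSpace ℝ (Fin N) => φ (‖y‖ ^ 2)) y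
          (EuclideanSpace.single i 1)) x (EuclideanSpace.single i 1)
        = 4 * φ'' * (x i) ^ 2 + 2 * φ' (‖x‖ ^ 2) := by
    intro i
    have hEv : (fun y => fderiv ℝ (fun y : EuclideanSpace ℝ (Fin N) => φ (‖y‖ ^ 2)) y
          (EuclideanSpace.single i 1))
        =ᶠ[nhds x] (fun y : EuclideanSpace ℝ (Fin N) => φ' (‖y‖ ^ 2) * (2 * y i)) :=
      Filter.eventually_of_mem (hopen.mem_nhds hx) (fun z hz => hval i z hz)
    rw [hEv.fderiv_eq]
    have hc : HasFDerivAt (fun y : EuclideanSpace ℝ (Fin N) => φ' (‖y‖ ^ 2))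
        (φ'' • (2 • (innerSL ℝ x))) x :=
      hd2.comp_hasFDerivAt x (hasStrictFDerivAt_norm_sq x).hasFDerivAt
    have hdcoord : HasFDerivAt (fun y : EuclideanSpace ℝ (Fin N) => 2 * y i)
        ((2:ℝ) • (EuclideanSpace.proj (𝕜 := ℝ) i)) x :=
      ((EuclideanSpace.proj (𝕜 := ℝ) i).hasFDerivAt).const_mul 2
    have hmul : HasFDerivAt (fun y : EuclideanSpace ℝ (Fin N) => φ' (‖y‖ ^ 2) * (2 * y i)) _ x :=
      hc.mul hdcoord
    rw [hmul.fderiv]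
    simp [EuclideanSpace.inner_single_right, EuclideanSpace.single_apply]
    ring
  unfold lap
  rw [Finset.sum_congr rfl (fun i _ => key i)]
  rw [Finset.sum_add_distrib]
  have hs : ‖x‖ ^ 2 = ∑ i, (x i) ^ 2 := by
    rw [EuclideanSpace.norm_eq, Real.sq_sqrt (by positivity)]
    simp [Real.norm_eq_abs, sq_abs]
  rw [Finset.sum_const, Finset.card_univ]
  simp only [← Finset.mul_sum]
  rw [← hs]
  simp [Fintype.card_fin]
  ring

set_option maxHeartbeats 2000000 in
lemma final_ineq (Nr q θ lam Θ ℓ α ν ε η sa m K p t : ℝ)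
    (hq : 1 < q)
    (hΘ : Θ = (θ + 2) / (q - 1)) (hℓ : ℓ = Θ ^ 2 - (Nr - 2) * Θ + lam) (hℓpos : 0 < ℓ)
    (hα0 : 0 < α) (hα1 : α ≤ 1) (hsa : sa = Real.sqrt α) (hm : m = 1 / sa)
    (hsaq : sa ≤ q - 1) (hsaB : sa * (|Nr - 2 - 2 * Θ| + 3) ≤ ℓ / 2)
    (hν : 0 < ν) (hε0 : 0 < ε) (hε1 : ε < 1)
    (hK : K = (1 - ε) * ℓ ^ (1 / (q - 1))) (hp : p = (η - Θ) / 2)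
    (hη0 : 0 < η) (hη1 : η ≤ 1)
    (hηM : η * (|Nr - 2 - 2 * Θ| + 1) < (1 - max ((1 - ε) ^ (q - 1)) (1 / 2)) * ℓ / 2)
    (ht0 : 0 < t) (ht1 : t < 1)
    (G V P' P : ℝ)
    (hG : G = 1 + t ^ (α / 2) / ν)
    (hP : P = K * t ^ p * G ^ (-m))
    (hP' : P' = K * p * t ^ (p - 1) * G ^ (-m)
        + K * (-m) * (α / 2 / ν) * t ^ (p + α / 2 - 1) * G ^ (-m - 1))
    (hV : V = K * p * (p - 1) * t ^ (p - 1 - 1) * G ^ (-m)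
        + K * p * (-m) * (α / 2 / ν) * t ^ (p - 1 + α / 2 - 1) * G ^ (-m - 1)
        + (K * (-m) * (α / 2 / ν) * (p + α / 2 - 1) * t ^ (p + α / 2 - 1 - 1) * G ^ (-m - 1)
          + K * (-m) * (α / 2 / ν) * (-m - 1) * (α / 2 / ν) * t ^ (p + α / 2 - 1 + α / 2 - 1)
            * G ^ (-m - 1 - 1))) :
    -(4 * t * V + 2 * Nr * P') - lam / t * P + t ^ (θ / 2) * P ^ q ≤ 0 := by
  have hq1 : (0:ℝ) < q - 1 := by linarith
  have hsa0 : 0 < sa := by rw [hsa]; exact Real.sqrt_pos.2 hα0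
  have hsasq : sa * sa = α := by rw [hsa]; exact Real.mul_self_sqrt hα0.le
  have hm0 : 0 < m := by rw [hm]; positivity
  have hK0 : 0 < K := by
    rw [hK]; exact mul_pos (by linarith) (Real.rpow_pos_of_pos hℓpos _)
  have hTa0 : 0 < t ^ (α / 2) := Real.rpow_pos_of_pos ht0 _
  have hG1 : 1 ≤ G := by
    rw [hG]; exact le_add_of_nonneg_right (div_pos hTa0 hν).le
  have hG0 : (0:ℝ) < G := by linarith
  set X := t ^ (p - 1) with hX
  set Ta := t ^ (α / 2) with hTa
  set Gm := G ^ (-m) with hGm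
  set cc := (1 - ε) ^ (q - 1) with hcc
  set Gq := G ^ (-((q - 1) * m)) with hGq
  set T1 := t ^ ((q - 1) * η / 2) with hT1
  set TT := Ta / (ν * G) with hTT
  have hX0 : 0 < X := Real.rpow_pos_of_pos ht0 _
  have hGm0 : 0 < Gm := Real.rpow_pos_of_pos hG0 _
  have hGq0 : 0 < Gq := Real.rpow_pos_of_pos hG0 _
  have hT10 : 0 < T1 := Real.rpow_pos_of_pos ht0 _
  -- rewriting facts
  have r1 : t ^ (p - 1 - 1) = X / t := by
    rw [eq_div_iff ht0.ne', hX, ← Real.rpow_add_one ht0.ne']; congr 1; ring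
  have r2 : t ^ (p - 1 + α / 2 - 1) = X * Ta / t := by
    rw [eq_div_iff ht0.ne', ← Real.rpow_add_one ht0.ne', hX, hTa, ← Real.rpow_add ht0]
    congr 1; ring
  have r3 : t ^ (p + α / 2 - 1 - 1) = X * Ta / t := by
    rw [eq_div_iff ht0.ne', ← Real.rpow_add_one ht0.ne', hX, hTa, ← Real.rpow_add ht0]
    congr 1; ring
  have r4 : t ^ (p + α / 2 - 1 + α / 2 - 1) = X * Ta * Ta / t := by
    rw [eq_div_iff ht0.ne', ← Real.rpow_add_one ht0.ne', hX, hTa, ← Real.rpow_add ht0,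
      ← Real.rpow_add ht0]
    congr 1; ring
  have r5 : t ^ p = X * t := by
    rw [hX, ← Real.rpow_add_one ht0.ne']; congr 1; ring
  have r6 : t ^ (p + α / 2 - 1) = X * Ta := by
    rw [hX, hTa, ← Real.rpow_add ht0]; congr 1; ring
  have r7 : G ^ (-m - 1) = Gm / G := by
    rw [eq_div_iff hG0.ne', hGm, ← Real.rpow_add_one hG0.ne']; congr 1; ring
  have r8 : G ^ (-m - 1 - 1) = Gm / G / G := by
    rw [div_div, eq_div_iff (by positivity : (G * G) ≠ 0), hGm, ← mul_assoc,
      ← Real.rpow_add_one hG0.ne', ← Real.rpow_add_one hG0.ne']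
    congr 1; ring
  have r9 : t ^ (θ / 2) * (K * t ^ p * Gm) ^ q = cc * ℓ * (K * X * Gm) * (T1 * Gq) := by
    have htp0 : (0:ℝ) ≤ t ^ p := (Real.rpow_pos_of_pos ht0 p).le
    have e1 : K ^ q = K * (cc * ℓ) := by
      have h' : K ^ q = K ^ ((1:ℝ) + (q - 1)) := by congr 1; ring
      rw [h', Real.rpow_add hK0, Real.rpow_one]
      congr 1
      rw [hK, Real.mul_rpow (by linarith : (0:ℝ) ≤ 1 - ε)
        (Real.rpow_pos_of_pos hℓpos _).le, hcc]
      congr 1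
      rw [← Real.rpow_mul hℓpos.le]
      rw [show 1 / (q - 1) * (q - 1) = (1:ℝ) from by field_simp]
      exact Real.rpow_one ℓ
    have e2 : t ^ (θ / 2) * (t ^ p) ^ q = X * T1 := by
      rw [← Real.rpow_mul ht0.le, ← Real.rpow_add ht0, hX, hT1, ← Real.rpow_add ht0]
      congr 1
      rw [hp, hΘ]; field_simp; ring
    have e3 : Gm ^ q = Gm * Gq := by
      rw [hGm, hGq, ← Real.rpow_mul hG0.le,
        show -m * q = -m + -((q - 1) * m) from by ring, Real.rpow_add hG0]
    rw [Real.mul_rpow (by positivity) hGm0.le, Real.mul_rpow hK0.le htp0]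
    linear_combination (t ^ (θ / 2) * (t ^ p) ^ q * Gm ^ q) * e1
      + (K * (cc * ℓ) * (t ^ (θ / 2) * (t ^ p) ^ q)) * e3
      + (K * (cc * ℓ) * (Gm * Gq)) * e2
  have key : -(4 * t * V + 2 * Nr * P') - lam / t * P + t ^ (θ / 2) * P ^ q
      = (K * X * Gm) * (-((η - Θ) ^ 2 + (Nr - 2) * (η - Θ) + lam)
          + m * α * (Nr - 2 - 2 * Θ + 2 * η + α) * TT
          - m * (m + 1) * α ^ 2 * TT ^ 2 + cc * ℓ * (T1 * Gq)) := by
    rw [hV, hP', hP, r9, r1, r2, r3, r4, r5, r6, r7, r8, hTT, hp]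
    field_simp
    ring
  rw [key]
  apply mul_nonpos_of_nonneg_of_nonpos
  · exact mul_nonneg (mul_nonneg hK0.le hX0.le) hGm0.le
  -- now bound the bracket
  set Mv := max cc (1 / 2) with hMv
  have hcc1 : cc < 1 := by
    rw [hcc]; exact Real.rpow_lt_one (by linarith) (by linarith) hq1
  have hcc0 : (0:ℝ) ≤ cc := by rw [hcc]; exact Real.rpow_nonneg (by linarith) _
  have hMv1 : Mv < 1 := by rw [hMv]; exact max_lt hcc1 (by norm_num)
  have hMv2 : (1:ℝ) / 2 ≤ Mv := le_max_right _ _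
  have hccMv : cc ≤ Mv := le_max_left _ _
  have hTT0 : 0 ≤ TT := by rw [hTT]; positivity
  have hνG : ν * G = ν + Ta := by rw [hG]; field_simp
  have hTT1 : TT ≤ 1 := by
    rw [hTT, div_le_one (by positivity)]
    rw [hνG]; linarith only [hν]
  have hGqle : Gq ≤ 1 - TT := by
    have hmq1 : (1:ℝ) ≤ (q - 1) * m := by
      rw [hm, mul_one_div]
      exact (one_le_div hsa0).2 hsaq
    have h1 : Gq ≤ G ^ (-1 : ℝ) := by
      rw [hGq]
      exact Real.rpow_le_rpow_of_exponent_le hG1 (by linarith only [hmq1])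
    have h2 : G ^ (-1 : ℝ) = 1 - TT := by
      rw [Real.rpow_neg_one, hTT, eq_sub_iff_add_eq]
      field_simp
      linarith only [hνG]
    linarith
  have hT1b : T1 ≤ 1 := Real.rpow_le_one ht0.le ht1.le (by positivity)
  have hA : Mv * ℓ < (η - Θ) ^ 2 + (Nr - 2) * (η - Θ) + lam := by
    have h1 : η * -|Nr - 2 - 2 * Θ| ≤ η * (Nr - 2 - 2 * Θ) :=
      mul_le_mul_of_nonneg_left (neg_abs_le _) hη0.le
    have h2 : (η - Θ) ^ 2 + (Nr - 2) * (η - Θ) + lam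
        = ℓ + η * (Nr - 2 - 2 * Θ) + η ^ 2 := by rw [hℓ]; ring
    have h3 : (0:ℝ) < (1 - Mv) * ℓ := mul_pos (by linarith only [hMv1]) hℓpos
    have h4 : η * (|Nr - 2 - 2 * Θ| + 1) = η * |Nr - 2 - 2 * Θ| + η := by ring
    rw [h2]
    nlinarith only [h1, h3, hηM, sq_nonneg η, hη0, h4]
  have hmα : m * α = sa := by
    rw [hm, one_div, inv_mul_eq_div, div_eq_iff hsa0.ne']; linarith [hsasq]
  have hsaB' : sa * (Nr - 2 - 2 * Θ + 2 * η + α) ≤ ℓ / 2 := by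
    have h1 : Nr - 2 - 2 * Θ + 2 * η + α ≤ |Nr - 2 - 2 * Θ| + 3 := by
      have h := le_abs_self (Nr - 2 - 2 * Θ); linarith only [h, hη1, hα1]
    exact le_trans (mul_le_mul_of_nonneg_left h1 hsa0.le) hsaB
  have hterm1 : m * α * (Nr - 2 - 2 * Θ + 2 * η + α) * TT ≤ Mv * ℓ * TT := by
    have h1 : m * α * (Nr - 2 - 2 * Θ + 2 * η + α) ≤ Mv * ℓ := by
      rw [hmα]
      nlinarith only [hsaB', hMv2, hℓpos]
    exact mul_le_mul_of_nonneg_right h1 hTT0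
  have hterm2 : 0 ≤ m * (m + 1) * α ^ 2 * TT ^ 2 := by positivity
  have hterm3 : cc * ℓ * (T1 * Gq) ≤ Mv * ℓ * (1 - TT) := by
    have h1 : T1 * Gq ≤ 1 - TT := by nlinarith only [hT1b, hGq0, hGqle, hT10]
    have h2 : cc * ℓ * (T1 * Gq) ≤ Mv * ℓ * (T1 * Gq) :=
      mul_le_mul_of_nonneg_right (mul_le_mul_of_nonneg_right hccMv hℓpos.le)
        (mul_nonneg hT10.le hGq0.le)
    have h3 : Mv * ℓ * (T1 * Gq) ≤ Mv * ℓ * (1 - TT) := by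
      have hMl : 0 ≤ Mv * ℓ := mul_nonneg (by linarith) hℓpos.le
      exact mul_le_mul_of_nonneg_left h1 hMl
    linarith
  nlinarith only [hA, hterm1, hterm2, hterm3]

set_option maxHeartbeats 1000000 in
theorem stmt_15 (N : ℕ) (hN : 3 ≤ N) (q θ lam : ℝ) (hq : 1 < q)
    (Θ ℓ : ℝ) (hΘ : Θ = (θ + 2) / (q - 1))
    (hℓ : ℓ = Θ ^ 2 - ((N : ℝ) - 2) * Θ + lam) (hℓpos : 0 < ℓ) :
    ∃ α : ℝ, 0 < α ∧ ∀ ν : ℝ, 0 < ν → ∀ ε ∈ Set.Ioo (0 : ℝ) 1,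
      ∃ η₀ : ℝ, 0 < η₀ ∧ ∀ η ∈ Set.Ioo (0 : ℝ) η₀,
        ∀ x : EuclideanSpace ℝ (Fin N), 0 < ‖x‖ → ‖x‖ < 1 →
          -lap (fun y => (1 - ε) * ℓ ^ (1 / (q - 1)) * ‖y‖ ^ (-Θ) * ‖y‖ ^ η
                * (1 + ‖y‖ ^ α / ν) ^ (-(1 / Real.sqrt α))) x
            - lam / ‖x‖ ^ 2 * ((1 - ε) * ℓ ^ (1 / (q - 1)) * ‖x‖ ^ (-Θ) * ‖x‖ ^ η
                * (1 + ‖x‖ ^ α / ν) ^ (-(1 / Real.sqrt α)))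
            + ‖x‖ ^ θ * ((1 - ε) * ℓ ^ (1 / (q - 1)) * ‖x‖ ^ (-Θ) * ‖x‖ ^ η
                * (1 + ‖x‖ ^ α / ν) ^ (-(1 / Real.sqrt α))) ^ q ≤ 0 := by
  have hq1 : (0:ℝ) < q - 1 := by linarith
  set D : ℝ := |(N:ℝ) - 2 - 2 * Θ| with hD
  have hDnn : (0:ℝ) ≤ D := abs_nonneg _
  have hD3 : (0:ℝ) < D + 3 := by linarith
  obtain ⟨α, hα0, hα1, hα2, hα3⟩ :
      ∃ α : ℝ, 0 < α ∧ α ≤ 1 ∧ α ≤ (q - 1) ^ 2 ∧ Real.sqrt α * (D + 3) ≤ ℓ / 2 := by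
    refine ⟨min 1 (min ((q - 1) ^ 2) ((ℓ / (2 * (D + 3))) ^ 2)), ?_, min_le_left _ _, ?_, ?_⟩
    · have h1 : (0:ℝ) < (q - 1) ^ 2 := by positivity
      have h2 : (0:ℝ) < (ℓ / (2 * (D + 3))) ^ 2 := by positivity
      exact lt_min one_pos (lt_min h1 h2)
    · exact le_trans (min_le_right _ _) (min_le_left _ _)
    · have hle : min 1 (min ((q - 1) ^ 2) ((ℓ / (2 * (D + 3))) ^ 2))
          ≤ (ℓ / (2 * (D + 3))) ^ 2 := le_trans (min_le_right _ _) (min_le_right _ _)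
      have h2 : Real.sqrt (min 1 (min ((q - 1) ^ 2) ((ℓ / (2 * (D + 3))) ^ 2)))
          ≤ ℓ / (2 * (D + 3)) := by
        calc Real.sqrt _ ≤ Real.sqrt ((ℓ / (2 * (D + 3))) ^ 2) := Real.sqrt_le_sqrt hle
        _ = ℓ / (2 * (D + 3)) := Real.sqrt_sq (by positivity)
      have h3 := mul_le_mul_of_nonneg_right h2 hD3.le
      have h4 : ℓ / (2 * (D + 3)) * (D + 3) = ℓ / 2 := by field_simp
      linarith
  refine ⟨α, hα0, ?_⟩
  intro ν hν ε hε
  have hε0 : (0:ℝ) < ε := hε.1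
  have hε1 : ε < 1 := hε.2
  have hMv1 : max ((1 - ε) ^ (q - 1)) (1 / 2) < 1 :=
    max_lt (Real.rpow_lt_one (by linarith) (by linarith) hq1) (by norm_num)
  have hD1 : (0:ℝ) < D + 1 := by linarith
  obtain ⟨η₀, hη₀0, hη₀1, hη₀2⟩ :
      ∃ η₀ : ℝ, 0 < η₀ ∧ η₀ ≤ 1 ∧
        η₀ ≤ (1 - max ((1 - ε) ^ (q - 1)) (1 / 2)) * ℓ / (2 * (D + 1)) := by
    refine ⟨min 1 ((1 - max ((1 - ε) ^ (q - 1)) (1 / 2)) * ℓ / (2 * (D + 1))), ?_,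
      min_le_left _ _, min_le_right _ _⟩
    exact lt_min one_pos (div_pos (mul_pos (by linarith) hℓpos) (by linarith))
  refine ⟨η₀, hη₀0, ?_⟩
  intro η hη x hx0 hx1
  have hη0' : 0 < η := hη.1
  have hη1 : η ≤ 1 := le_of_lt (lt_of_lt_of_le hη.2 hη₀1)
  have hηM : η * (D + 1) < (1 - max ((1 - ε) ^ (q - 1)) (1 / 2)) * ℓ / 2 := by
    have h' : η < (1 - max ((1 - ε) ^ (q - 1)) (1 / 2)) * ℓ / (2 * (D + 1)) :=
      lt_of_lt_of_le hη.2 hη₀2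
    rw [lt_div_iff₀ (by linarith)] at h'
    linarith
  set sa := Real.sqrt α with hsadef
  have hsaq : sa ≤ q - 1 := by
    rw [hsadef]
    calc Real.sqrt α ≤ Real.sqrt ((q - 1) ^ 2) := Real.sqrt_le_sqrt hα2
    _ = q - 1 := Real.sqrt_sq (by linarith)
  set m := 1 / sa with hmdef
  set K := (1 - ε) * ℓ ^ (1 / (q - 1)) with hKdef
  set p := (η - Θ) / 2 with hpdef
  set φ : ℝ → ℝ := fun s => K * s ^ p * (1 + s ^ (α / 2) / ν) ^ (-m) with hφdef
  set φ' : ℝ → ℝ := fun s => K * p * s ^ (p - 1) * (1 + s ^ (α / 2) / ν) ^ (-m)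
      + K * (-m) * (α / 2 / ν) * s ^ (p + α / 2 - 1) * (1 + s ^ (α / 2) / ν) ^ (-m - 1)
      with hφ'def
  have hbxy : ∀ (z : EuclideanSpace ℝ (Fin N)) (β : ℝ),
      ((‖z‖ ^ 2 : ℝ)) ^ β = ‖z‖ ^ (2 * β) := by
    intro z β
    rw [← Real.rpow_natCast ‖z‖ 2, ← Real.rpow_mul (norm_nonneg z)]
    norm_num
  have hpt : ∀ y : EuclideanSpace ℝ (Fin N), 0 < ‖y‖ →
      K * ‖y‖ ^ (-Θ) * ‖y‖ ^ η * (1 + ‖y‖ ^ α / ν) ^ (-m) = φ (‖y‖ ^ 2) := by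
    intro y hy
    simp only [hφdef]
    rw [hbxy y p, hbxy y (α / 2)]
    rw [show 2 * (α / 2) = α from by ring]
    rw [show 2 * p = -Θ + η from by rw [hpdef]; ring]
    rw [Real.rpow_add hy]
    ring
  rw [lap_congr hx0 hpt, hpt x hx0]
  set t := ‖x‖ ^ 2 with htdef
  have ht0 : (0:ℝ) < t := by rw [htdef]; positivity
  have ht1 : t < 1 := by
    rw [htdef]
    exact pow_lt_one₀ (norm_nonneg x) hx1 two_ne_zero
  have hxθ : ‖x‖ ^ θ = t ^ (θ / 2) := by
    rw [htdef, hbxy x (θ / 2), show 2 * (θ / 2) = θ from by ring]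
  rw [hxθ]
  have hd1 : ∀ s : ℝ, 0 < s → HasDerivAt φ (φ' s) s := by
    intro s hs
    rw [hφdef, hφ'def]
    exact hasDerivAt_psi (α / 2) ν K p (-m) hν s hs
  set V : ℝ := K * p * (p - 1) * t ^ (p - 1 - 1) * (1 + t ^ (α / 2) / ν) ^ (-m)
      + K * p * (-m) * (α / 2 / ν) * t ^ (p - 1 + α / 2 - 1) * (1 + t ^ (α / 2) / ν) ^ (-m - 1)
      + (K * (-m) * (α / 2 / ν) * (p + α / 2 - 1) * t ^ (p + α / 2 - 1 - 1)
          * (1 + t ^ (α / 2) / ν) ^ (-m - 1)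
        + K * (-m) * (α / 2 / ν) * (-m - 1) * (α / 2 / ν) * t ^ (p + α / 2 - 1 + α / 2 - 1)
          * (1 + t ^ (α / 2) / ν) ^ (-m - 1 - 1)) with hVdef
  have hd2 : HasDerivAt φ' V t := by
    rw [hφ'def, hVdef]
    exact (hasDerivAt_psi (α / 2) ν (K * p) (p - 1) (-m) hν t ht0).add
      (hasDerivAt_psi (α / 2) ν (K * (-m) * (α / 2 / ν)) (p + α / 2 - 1) (-m - 1) hν t ht0)
  have hlap : lap (fun y => φ (‖y‖ ^ 2)) x = 4 * t * V + 2 * N * φ' t := by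
    have h := lap_radial φ φ' V x hx0 hd1 (htdef ▸ hd2)
    rw [h, ← htdef]
  rw [hlap]
  have hsaB : sa * (|(N:ℝ) - 2 - 2 * Θ| + 3) ≤ ℓ / 2 := by rw [← hD]; exact hα3
  have hηM' : η * (|(N:ℝ) - 2 - 2 * Θ| + 1)
      < (1 - max ((1 - ε) ^ (q - 1)) (1 / 2)) * ℓ / 2 := by rw [← hD]; exact hηM
  exact final_ineq (N:ℝ) q θ lam Θ ℓ α ν ε η sa m K p t hq hΘ hℓ hℓpos hα0 hα1 hsadef
    hmdef hsaq hsaB hν hε0 hε1 hKdef hpdef hη0' hη1 hηM' ht0 ht1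
    (1 + t ^ (α / 2) / ν) V (φ' t) (φ t) rfl (by simp only [hφdef]) (by simp only [hφ'def])
    hVdef
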